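/- Let Ψ be a monotone Boolean formula over x_1,y_1,...,x_n,y_n, let D_n = x_1∧y_1 ∨ ... ∨ x_n∧y_n, and let w_1,w_2,w_3,w_4 be fresh variables. Then Ψ → D_n is a tautology if and only if the formula (Ψ ∧ (w_1∧w_3 ∨ w_2∧w_4)) ∧ (D_n ∨ w_1∧w_2 ∨ w_3∧w_4) computes a read-once function. -/

import Mathlib

/-- Monotone Boolean formulas over a variable type `V`, built from variables with ∧ and ∨. -/
inductive MonFormula (V : Type) : Type
  | var : V → MonFormula V
  | conj : MonFormula V → MonFormula V → MonFormula V
  | disj : MonFormula V → MonFormula V → MonFormula V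

namespace MonFormula

def eval {V : Type} : MonFormula V → (V → Bool) → Bool
  | var v, a => a v
  | conj φ ψ, a => eval φ a && eval ψ a
  | disj φ ψ, a => eval φ a || eval ψ a

/-- Number of occurrences of the variable `v` in the formula. -/
def occs {V : Type} [DecidableEq V] : MonFormula V → V → ℕ
  | var u, v => if u = v then 1 else 0
  | conj φ ψ, v => occs φ v + occs ψ v
  | disj φ ψ, v => occs φ v + occs ψ v

/-- A formula is read-once if every variable occurs at most once in it. -/
def ReadOnce {V : Type} [DecidableEq V] (φ : MonFormula V) : Prop :=
  ∀ v, φ.occs v ≤ 1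

end MonFormula

/-- A Boolean function is read-once if some read-once monotone formula computes it. -/
def ReadOnceFun {V : Type} [DecidableEq V] (f : (V → Bool) → Bool) : Prop :=
  ∃ φ : MonFormula V, φ.ReadOnce ∧ ∀ a, φ.eval a = f a

namespace MonFormula

lemma eval_congr {V : Type} [DecidableEq V] (φ : MonFormula V) (a b : V → Bool)
    (h : ∀ v, φ.occs v ≠ 0 → a v = b v) : φ.eval a = φ.eval b := by
  induction φ with
  | var v => exact h v (by simp [occs])
  | conj p q ih1 ih2 =>
      simp only [eval]
      rw [ih1 (fun v hv => h v (by simp [occs]; omega)),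
          ih2 (fun v hv => h v (by simp [occs]; omega))]
  | disj p q ih1 ih2 =>
      simp only [eval]
      rw [ih1 (fun v hv => h v (by simp [occs]; omega)),
          ih2 (fun v hv => h v (by simp [occs]; omega))]

/-- the 3-out-of-4 threshold function -/
def th34 (w : Fin 4 → Bool) : Bool :=
  ((w 0 && w 2) || (w 1 && w 3)) && ((w 0 && w 1) || (w 2 && w 3))

lemma th34_false (w : Fin 4 → Bool) (u v : Fin 4) (huv : u ≠ v)
    (hu : w u = false) (hv : w v = false) : th34 w = false := by
  revert huv hu hv; revert u v; revert w; decide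

lemma th34_one (v : Fin 4) : th34 (fun u => decide (u = v)) = false := by
  revert v; decide

lemma th34_three (v : Fin 4) : th34 (fun u => decide (u ≠ v)) = true := by
  revert v; decide

lemma th34_two (v1 v2 : Fin 4) (h : v1 ≠ v2) :
    th34 (fun u => decide (u ≠ v1) && decide (u ≠ v2)) = false := by
  revert h; revert v1 v2; decide

lemma disj_small (φ1 φ2 : MonFormula (Fin 4))
    (hcard : (Finset.univ.filter (fun v => φ1.occs v ≠ 0)).card ≤ 2)
    (h : ∀ w, (φ1.eval w || φ2.eval w) = th34 w) : ∀ w, φ2.eval w = th34 w := by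
  have h1 : ∀ w, φ1.eval w = false := by
    intro w
    have hc : φ1.eval w = φ1.eval (fun v => w v && decide (φ1.occs v ≠ 0)) :=
      eval_congr _ _ _ (fun v hv => by simp [hv])
    by_contra hne
    have ht : φ1.eval (fun v => w v && decide (φ1.occs v ≠ 0)) = true := by
      rw [← hc]; revert hne; cases φ1.eval w <;> simp
    have hg : th34 (fun v => w v && decide (φ1.occs v ≠ 0)) = true := by
      rw [← h _, ht]; simp
    have hcc : 1 < (Finset.univ.filter (fun v => φ1.occs v = 0)).card := by
      have := Finset.card_filter_add_card_filter_not
        (s := (Finset.univ : Finset (Fin 4))) (p := fun v => φ1.occs v ≠ 0)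
      simp only [Finset.card_univ, Fintype.card_fin] at this
      have he : (Finset.univ.filter (fun v => ¬ φ1.occs v ≠ 0)).card
          = (Finset.univ.filter (fun v => φ1.occs v = 0)).card := by
        congr 1; ext v; simp
      omega
    obtain ⟨u, hu, v, hv, huv⟩ := Finset.one_lt_card.mp hcc
    simp only [Finset.mem_filter] at hu hv
    have := th34_false (fun v => w v && decide (φ1.occs v ≠ 0)) u v huv
      (by simp [hu.2]) (by simp [hv.2])
    rw [hg] at this; exact Bool.true_eq_false.mp this
  intro w
  rw [← h w, h1 w]; simp

lemma readOnce_conj {V : Type} [DecidableEq V] {φ1 φ2 : MonFormula V}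
    (h : ReadOnce (conj φ1 φ2)) :
    ReadOnce φ1 ∧ ReadOnce φ2 ∧ ∀ v, φ1.occs v = 0 ∨ φ2.occs v = 0 := by
  refine ⟨fun v => ?_, fun v => ?_, fun v => ?_⟩ <;>
    · have := h v; simp only [occs] at this; omega

lemma readOnce_disj {V : Type} [DecidableEq V] {φ1 φ2 : MonFormula V}
    (h : ReadOnce (disj φ1 φ2)) :
    ReadOnce φ1 ∧ ReadOnce φ2 ∧ ∀ v, φ1.occs v = 0 ∨ φ2.occs v = 0 := by
  refine ⟨fun v => ?_, fun v => ?_, fun v => ?_⟩ <;>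
    · have := h v; simp only [occs] at this; omega

lemma not_ro_th34 : ∀ φ : MonFormula (Fin 4), φ.ReadOnce →
    ¬(∀ w, φ.eval w = th34 w) := by
  intro φ
  induction φ with
  | var v =>
      intro _ h
      have := h (fun u => decide (u = v))
      simp only [eval] at this
      rw [th34_one v] at this
      simp at this
  | conj φ1 φ2 ih1 ih2 =>
      intro hro h
      obtain ⟨hro1, hro2, hdisj⟩ := readOnce_conj hro
      simp only [eval] at h
      by_cases he1 : ∀ v, φ1.occs v = 0
      · -- φ1 is constant; it must be true at the all-true point
        have hconst : ∀ w, φ1.eval w = φ1.eval (fun _ => true) :=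
          fun w => eval_congr _ _ _ (fun v hv => absurd (he1 v) hv)
        have htop := h (fun _ => true)
        have htt : th34 (fun _ => true) = true := by decide
        rw [htt] at htop
        have h1t : φ1.eval (fun _ => true) = true := by
          rw [Bool.and_eq_true] at htop; exact htop.1
        exact ih2 hro2 (fun w => by rw [← h w, hconst w, h1t, Bool.true_and])
      by_cases he2 : ∀ v, φ2.occs v = 0
      · have hconst : ∀ w, φ2.eval w = φ2.eval (fun _ => true) :=
          fun w => eval_congr _ _ _ (fun v hv => absurd (he2 v) hv)
        have htop := h (fun _ => true)
        have htt : th34 (fun _ => true) = true := by decide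
        rw [htt] at htop
        have h2t : φ2.eval (fun _ => true) = true := by
          rw [Bool.and_eq_true] at htop; exact htop.2
        exact ih1 hro1 (fun w => by rw [← h w, hconst w, h2t, Bool.and_true])
      push_neg at he1 he2
      obtain ⟨v1, hv1⟩ := he1
      obtain ⟨v2, hv2⟩ := he2
      have hne : v1 ≠ v2 := by
        intro hEq; subst hEq; rcases hdisj v1 with h' | h' <;> omega
      -- φ1 is true on the point (≠ v1), φ2 on (≠ v2)
      have h3a := h (fun u => decide (u ≠ v1))
      rw [th34_three v1] at h3a
      rw [Bool.and_eq_true] at h3a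
      obtain ⟨ha1, -⟩ := h3a
      have h3b := h (fun u => decide (u ≠ v2))
      rw [th34_three v2] at h3b
      rw [Bool.and_eq_true] at h3b
      obtain ⟨-, hb2⟩ := h3b
      set b : Fin 4 → Bool := fun u => decide (u ≠ v1) && decide (u ≠ v2) with hb
      have hocc1v2 : φ1.occs v2 = 0 := by rcases hdisj v2 with h' | h'; exact h'; omega
      have hocc2v1 : φ2.occs v1 = 0 := by rcases hdisj v1 with h' | h'; omega; exact h'
      have hb1 : φ1.eval b = φ1.eval (fun u => decide (u ≠ v1)) := by
        apply eval_congr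
        intro v hv
        have : v ≠ v2 := fun hEq => by subst hEq; exact hv hocc1v2
        simp [hb, this]
      have hb2' : φ2.eval b = φ2.eval (fun u => decide (u ≠ v2)) := by
        apply eval_congr
        intro v hv
        have : v ≠ v1 := fun hEq => by subst hEq; exact hv hocc2v1
        simp [hb, this]
      have := h b
      rw [hb1, ha1, hb2', hb2, th34_two v1 v2 hne] at this
      simp at this
  | disj φ1 φ2 ih1 ih2 =>
      intro hro h
      obtain ⟨hro1, hro2, hdisj⟩ := readOnce_disj hro
      simp only [eval] at h
      set s1 := Finset.univ.filter (fun v => φ1.occs v ≠ 0) with hs1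
      set s2 := Finset.univ.filter (fun v => φ2.occs v ≠ 0) with hs2
      have hdisj' : Disjoint s1 s2 := by
        rw [Finset.disjoint_left]
        intro v hv1 hv2
        simp only [hs1, hs2, Finset.mem_filter] at hv1 hv2
        rcases hdisj v with h' | h'
        exacts [hv1.2 h', hv2.2 h']
      have hcard : s1.card + s2.card ≤ 4 := by
        rw [← Finset.card_union_of_disjoint hdisj']
        simpa using Finset.card_le_univ (s1 ∪ s2)
      rcases le_or_gt s1.card 2 with hle | hlt
      · exact ih2 hro2 (disj_small φ1 φ2 hle h)
      · have hle2 : s2.card ≤ 2 := by omega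
        exact ih1 hro1 (disj_small φ2 φ1 hle2
          (fun w => by rw [Bool.or_comm]; exact h w))

end MonFormula

namespace MonFormula

def mapv {A B : Type} (f : A → B) : MonFormula A → MonFormula B
  | var v => var (f v)
  | conj p q => conj (mapv f p) (mapv f q)
  | disj p q => disj (mapv f p) (mapv f q)

lemma eval_mapv {A B : Type} (f : A → B) (φ : MonFormula A) (b : B → Bool) :
    (mapv f φ).eval b = φ.eval (fun v => b (f v)) := by
  induction φ with
  | var v => rfl
  | conj p q ih1 ih2 => simp [mapv, eval, ih1, ih2]
  | disj p q ih1 ih2 => simp [mapv, eval, ih1, ih2]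

lemma occs_mapv_inj {A B : Type} [DecidableEq A] [DecidableEq B] {f : A → B}
    (hf : Function.Injective f) (φ : MonFormula A) (v : A) :
    (mapv f φ).occs (f v) = φ.occs v := by
  induction φ with
  | var u => simp [mapv, occs, hf.eq_iff]
  | conj p q ih1 ih2 => simp [mapv, occs, ih1, ih2]
  | disj p q ih1 ih2 => simp [mapv, occs, ih1, ih2]

lemma occs_mapv_ne {A B : Type} [DecidableEq B] {f : A → B}
    (φ : MonFormula A) (u : B) (h : ∀ v, f v ≠ u) :
    (mapv f φ).occs u = 0 := by
  induction φ with
  | var w => simp [mapv, occs, h w]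
  | conj p q ih1 ih2 => simp [mapv, occs, ih1, ih2]
  | disj p q ih1 ih2 => simp [mapv, occs, ih1, ih2]

section Subst

variable {V W : Type} [DecidableEq V] [DecidableEq W]

/-- combine partial results with AND -/
def andC : Bool ⊕ MonFormula W → Bool ⊕ MonFormula W → Bool ⊕ MonFormula W
  | .inl b, r => if b then r else .inl false
  | .inr f, .inl b => if b then .inr f else .inl false
  | .inr f, .inr g => .inr (conj f g)

def orC : Bool ⊕ MonFormula W → Bool ⊕ MonFormula W → Bool ⊕ MonFormula W
  | .inl b, r => if b then .inl true else r
  | .inr f, .inl b => if b then .inl true else .inr f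
  | .inr f, .inr g => .inr (disj f g)

def denote : Bool ⊕ MonFormula W → (W → Bool) → Bool
  | .inl b, _ => b
  | .inr f, w => f.eval w

def coccs : Bool ⊕ MonFormula W → W → ℕ
  | .inl _, _ => 0
  | .inr f, v => f.occs v

lemma denote_andC (x y : Bool ⊕ MonFormula W) (w : W → Bool) :
    denote (andC x y) w = (denote x w && denote y w) := by
  rcases x with b | f <;> rcases y with c | g
  · cases b <;> simp [andC, denote]
  · cases b <;> simp [andC, denote]
  · cases c <;> simp [andC, denote]
  · simp [andC, denote, eval]

lemma denote_orC (x y : Bool ⊕ MonFormula W) (w : W → Bool) :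
    denote (orC x y) w = (denote x w || denote y w) := by
  rcases x with b | f <;> rcases y with c | g
  · cases b <;> simp [orC, denote]
  · cases b <;> simp [orC, denote]
  · cases c <;> simp [orC, denote]
  · simp [orC, denote, eval]

lemma coccs_andC (x y : Bool ⊕ MonFormula W) (v : W) :
    coccs (andC x y) v ≤ coccs x v + coccs y v := by
  rcases x with b | f <;> rcases y with c | g
  · cases b <;> simp [andC, coccs]
  · cases b <;> simp [andC, coccs]
  · cases c <;> simp [andC, coccs]
  · simp [andC, coccs, occs]

lemma coccs_orC (x y : Bool ⊕ MonFormula W) (v : W) :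
    coccs (orC x y) v ≤ coccs x v + coccs y v := by
  rcases x with b | f <;> rcases y with c | g
  · cases b <;> simp [orC, coccs]
  · cases b <;> simp [orC, coccs]
  · cases c <;> simp [orC, coccs]
  · simp [orC, coccs, occs]

def subst (a : V → Bool) : MonFormula (V ⊕ W) → Bool ⊕ MonFormula W
  | var (.inl v) => .inl (a v)
  | var (.inr w) => .inr (var w)
  | conj p q => andC (subst a p) (subst a q)
  | disj p q => orC (subst a p) (subst a q)

lemma denote_subst (a : V → Bool) (φ : MonFormula (V ⊕ W)) (w : W → Bool) :
    denote (subst a φ) w = φ.eval (Sum.elim a w) := by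
  induction φ with
  | var u => rcases u with v | x <;> simp [subst, denote, eval]
  | conj p q ih1 ih2 => simp [subst, denote_andC, eval, ih1, ih2]
  | disj p q ih1 ih2 => simp [subst, denote_orC, eval, ih1, ih2]

lemma coccs_subst (a : V → Bool) (φ : MonFormula (V ⊕ W)) (v : W) :
    coccs (subst a φ) v ≤ φ.occs (Sum.inr v) := by
  induction φ with
  | var u =>
      rcases u with x | x
      · simp [subst, coccs, occs]
      · simp [subst, coccs, occs, Sum.inr.injEq]
  | conj p q ih1 ih2 =>
      calc coccs (andC (subst a p) (subst a q)) v
          ≤ coccs (subst a p) v + coccs (subst a q) v := coccs_andC _ _ _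
        _ ≤ _ := by simp only [occs]; omega
  | disj p q ih1 ih2 =>
      calc coccs (orC (subst a p) (subst a q)) v
          ≤ coccs (subst a p) v + coccs (subst a q) v := coccs_orC _ _ _
        _ ≤ _ := by simp only [occs]; omega

end Subst

end MonFormula

/-- Variables: `Sum.inl (i, false)` is `x_i`, `Sum.inl (i, true)` is `y_i`, and
`Sum.inr 0, …, Sum.inr 3` are the fresh variables `w_1, …, w_4`.
For a read-once monotone formula `Ψ` over `x_1, y_1, …, x_n, y_n`:
`Ψ → D_n` is a tautology iff
`(Ψ ∧ (w1∧w3 ∨ w2∧w4)) ∧ (D_n ∨ w1∧w2 ∨ w3∧w4)` computes a read-once function. -/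
theorem stmt_11 (n : ℕ) (Ψ : MonFormula (Fin n × Bool)) (hro : Ψ.ReadOnce) :
    (∀ a : Fin n × Bool → Bool,
        Ψ.eval a = true → ∃ i : Fin n, a (i, false) = true ∧ a (i, true) = true) ↔
      ReadOnceFun (fun b : (Fin n × Bool) ⊕ Fin 4 → Bool =>
        (Ψ.eval (fun p => b (Sum.inl p)) &&
          (b (Sum.inr 0) && b (Sum.inr 2) || b (Sum.inr 1) && b (Sum.inr 3))) &&
        (decide (∃ i : Fin n, b (Sum.inl (i, false)) = true ∧
            b (Sum.inl (i, true)) = true) ||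
          b (Sum.inr 0) && b (Sum.inr 1) || b (Sum.inr 2) && b (Sum.inr 3))) := by
  constructor
  · intro hD
    refine ⟨MonFormula.conj (MonFormula.mapv Sum.inl Ψ)
      (MonFormula.disj
        (MonFormula.conj (MonFormula.var (Sum.inr 0)) (MonFormula.var (Sum.inr 2)))
        (MonFormula.conj (MonFormula.var (Sum.inr 1)) (MonFormula.var (Sum.inr 3)))),
      ?_, ?_⟩
    · intro u
      rcases u with v | j
      · have h1 := MonFormula.occs_mapv_inj (Sum.inl_injective (α := Fin n × Bool) (β := Fin 4)) Ψ v
        simpa [MonFormula.occs, h1] using hro v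
      · have h0 := MonFormula.occs_mapv_ne (f := (Sum.inl : (Fin n × Bool) → (Fin n × Bool) ⊕ Fin 4)) Ψ
          (Sum.inr j) (fun v => by simp)
        simp only [MonFormula.occs, h0]
        fin_cases j <;> simp
    · intro b
      have he := MonFormula.eval_mapv (Sum.inl : (Fin n × Bool) → _) Ψ b
      simp only [MonFormula.eval, he]
      cases hc : Ψ.eval (fun p => b (Sum.inl p)) with
      | false => simp
      | true =>
        obtain ⟨i, h1, h2⟩ := hD _ hc
        have hd : decide (∃ i : Fin n, b (Sum.inl (i, false)) = true ∧
            b (Sum.inl (i, true)) = true) = true := decide_eq_true ⟨i, h1, h2⟩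
        simp [hd]
  · rintro ⟨φ, hφro, hφeval⟩
    by_contra hne
    push_neg at hne
    obtain ⟨a, ha, hno⟩ := hne
    have hd : decide (∃ i : Fin n, a (i, false) = true ∧ a (i, true) = true) = false := by
      rw [decide_eq_false_iff_not]
      rintro ⟨i, h1, h2⟩
      exact hno i h1 h2
    rcases hs : MonFormula.subst a φ with c | ψ
    · have e0 := MonFormula.denote_subst a φ (fun _ => false)
      have e1 := MonFormula.denote_subst a φ (fun _ => true)
      rw [hs] at e0 e1
      simp only [MonFormula.denote] at e0 e1
      rw [hφeval] at e0 e1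
      simp [ha, hd] at e0 e1
      rw [e0] at e1
      exact Bool.false_ne_true e1
    · have hroψ : ψ.ReadOnce := by
        intro v
        have h1 := MonFormula.coccs_subst a φ v
        rw [hs] at h1
        exact le_trans h1 (hφro _)
      apply MonFormula.not_ro_th34 ψ hroψ
      intro w
      have h1 := MonFormula.denote_subst a φ w
      rw [hs] at h1
      simp only [MonFormula.denote] at h1
      rw [hφeval] at h1
      rw [h1]
      simp only [Sum.elim_inl, Sum.elim_inr, ha, decide_eq_false_iff_not.mp hd]
      simp [MonFormula.th34]
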